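/- The function φ : ℝ^d → ℝ, φ(x) = |x|³ (Euclidean norm cubed) is convex, and its Bregman divergence satisfies d(w; v) := φ(v+w) − φ(v) − ⟨∇φ(v), w⟩ ≥ c |w|³ for some universal constant c > 0 independent of v, w. -/

import Mathlib

open RealInnerProductSpace

theorem norm_cubed_convex_and_bregman_lower_bound :
    (∀ d : ℕ, ConvexOn ℝ Set.univ
      (fun x : EuclideanSpace ℝ (Fin d) => ‖x‖ ^ 3)) ∧
    ∃ c : ℝ, 0 < c ∧ ∀ (d : ℕ) (v w : EuclideanSpace ℝ (Fin d)),
      ‖v + w‖ ^ 3 - ‖v‖ ^ 3 - ⟪(3 * ‖v‖) • v, w⟫ ≥ c * ‖w‖ ^ 3 := by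
  constructor
  · intro d
    refine ⟨convex_univ, fun x _ y _ a b hp hq hab => ?_⟩
    have h1 : ‖a • x + b • y‖ ≤ a * ‖x‖ + b * ‖y‖ := by
      calc ‖a • x + b • y‖ ≤ ‖a • x‖ + ‖b • y‖ := norm_add_le _ _
        _ = a * ‖x‖ + b * ‖y‖ := by
          rw [norm_smul, norm_smul, Real.norm_eq_abs, Real.norm_eq_abs,
            abs_of_nonneg hp, abs_of_nonneg hq]
    have h2 : ‖a • x + b • y‖ ^ 3 ≤ (a * ‖x‖ + b * ‖y‖) ^ 3 :=
      pow_le_pow_left₀ (norm_nonneg _) h1 3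
    have h3 := (convexOn_pow (𝕜 := ℝ) 3).2 (Set.mem_Ici.2 (norm_nonneg x))
      (Set.mem_Ici.2 (norm_nonneg y)) hp hq hab
    simp only [smul_eq_mul] at h3
    exact h2.trans h3
  · refine ⟨3/16, by norm_num, fun d v w => ?_⟩
    set a := ‖v‖ with ha
    set b := ‖v + w‖ with hb
    set t := ‖w‖ with ht
    have ha0 : 0 ≤ a := norm_nonneg _
    have hb0 : 0 ≤ b := norm_nonneg _
    have ht0 : 0 ≤ t := norm_nonneg _
    have htri : t ≤ a + b := by
      have := norm_sub_le (v + w) v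
      simpa [add_comm] using this
    have hba : b - a ≤ t := by
      have := norm_sub_le (v + w) w
      have h2 := norm_le_norm_add_const_of_dist_le (by simp [dist_eq_norm, ht] : dist (v+w) v ≤ t)
      linarith [norm_sub_norm_le (v + w) v, norm_sub_le (v + w) v]
    have hinner : ⟪v, w⟫ = (b ^ 2 - a ^ 2 - t ^ 2) / 2 := by
      have : b ^ 2 = a ^ 2 + 2 * ⟪v, w⟫ + t ^ 2 := by
        rw [hb, ha, ht]
        rw [@norm_add_sq_real]
      linarith
    have hsmul : ⟪(3 * a) • v, w⟫ = 3 * a * ((b ^ 2 - a ^ 2 - t ^ 2) / 2) := by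
      rw [real_inner_smul_left, hinner]
    rw [hsmul]
    have key : b ^ 3 - a ^ 3 - 3 * a * ((b ^ 2 - a ^ 2 - t ^ 2) / 2)
        = (b - a) ^ 2 * (b + a / 2) + (3 / 2) * a * t ^ 2 := by ring
    rw [key]
    by_cases hcase : a ≤ t / 4
    · have hbt : t - 2 * a ≤ b - a := by linarith
      have hb34 : 3 * t / 4 ≤ b := by linarith
      have h1 : (t / 2) ^ 2 ≤ (b - a) ^ 2 := by nlinarith
      have : (t / 2) ^ 2 * (3 * t / 4) ≤ (b - a) ^ 2 * (b + a / 2) := by nlinarith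
      nlinarith
    · push_neg at hcase
      have : 3 / 16 * t ^ 3 ≤ 3 / 2 * a * t ^ 2 := by nlinarith
      nlinarith [sq_nonneg (b - a), mul_nonneg (sq_nonneg (b - a)) (by linarith : (0:ℝ) ≤ b + a / 2)]
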